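/- Let c ∈ ℝ \ {0}, let (c_m)_{m≥0} be the coefficient sequence of the Degasperis–Procesi conserved quantities, and set c* := ((3+√5)/2)³. If 0 < |c| < c*, then |c_m| → +∞ as m → ∞; if |c| > c*, then |c_m| → 0 as m → ∞. -/

import Mathlib

/-- The coefficient sequence of the Degasperis–Procesi conserved quantities:
`c₀ = −1/(3c)`, `c₁ = −2/(9ct)`, `c_{m+2} = −t⁻² c_m + 3 t⁻¹ c_{m+1}`,
where `t` is the real cube root of `c`. -/
noncomputable def cseq (c t : ℝ) : ℕ → ℝ
  | 0 => -1 / (3 * c)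
  | 1 => -2 / (9 * c * t)
  | n + 2 => -(t ^ 2)⁻¹ * cseq c t n + 3 * t⁻¹ * cseq c t (n + 1)

lemma cseq_closed (c t : ℝ) (hc : c ≠ 0) (ht : t ^ 3 = c) (m : ℕ) :
    cseq c t m = (Real.sqrt 5 - 3) / (18 * c) * ((3 + Real.sqrt 5) / (2 * t)) ^ m
      + (-Real.sqrt 5 - 3) / (18 * c) * ((3 - Real.sqrt 5) / (2 * t)) ^ m := by
  have ht0 : t ≠ 0 := fun h => hc (by rw [← ht, h]; ring)
  have hs : Real.sqrt 5 * Real.sqrt 5 = 5 := Real.mul_self_sqrt (by norm_num)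
  induction m using Nat.twoStepInduction with
  | zero => show -1 / (3 * c) = _; field_simp; ring
  | one =>
    show -2 / (9 * c * t) = _
    subst ht
    field_simp
    linear_combination (-18) * hs
  | more n ih1 ih2 =>
    show -(t ^ 2)⁻¹ * cseq c t n + 3 * t⁻¹ * cseq c t (n + 1) = _
    rw [ih1, ih2]
    have hp : ((3 + Real.sqrt 5) / (2 * t)) ^ 2
        = 3 * t⁻¹ * ((3 + Real.sqrt 5) / (2 * t)) - (t ^ 2)⁻¹ := by
      field_simp; linear_combination hs
    have hq : ((3 - Real.sqrt 5) / (2 * t)) ^ 2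
        = 3 * t⁻¹ * ((3 - Real.sqrt 5) / (2 * t)) - (t ^ 2)⁻¹ := by
      field_simp; linear_combination hs
    have e1 : ((3 + Real.sqrt 5) / (2 * t)) ^ (n+2)
        = ((3 + Real.sqrt 5) / (2 * t)) ^ n * ((3 + Real.sqrt 5) / (2 * t)) ^ 2 := by ring
    have e2 : ((3 - Real.sqrt 5) / (2 * t)) ^ (n+2)
        = ((3 - Real.sqrt 5) / (2 * t)) ^ n * ((3 - Real.sqrt 5) / (2 * t)) ^ 2 := by ring
    rw [e1, e2, hp, hq]
    ring


/-- Asymptotics of the coefficients: with `c* = ((3+√5)/2)³`,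
if `0 < |c| < c*` then `|c_m| → +∞`, while if `|c| > c*` then `|c_m| → 0`. -/
theorem stmt11 (c t : ℝ) (hc : c ≠ 0) (ht : t ^ 3 = c) :
    (|c| < ((3 + Real.sqrt 5) / 2) ^ 3 →
      Filter.Tendsto (fun m : ℕ => |cseq c t m|) Filter.atTop Filter.atTop) ∧
    (((3 + Real.sqrt 5) / 2) ^ 3 < |c| →
      Filter.Tendsto (fun m : ℕ => |cseq c t m|) Filter.atTop (nhds 0)) := by
  have ht0 : t ≠ 0 := fun h => hc (by rw [← ht, h]; ring)
  have hs : Real.sqrt 5 * Real.sqrt 5 = 5 := Real.mul_self_sqrt (by norm_num)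
  have hs0 : (0:ℝ) ≤ Real.sqrt 5 := Real.sqrt_nonneg 5
  have hs2 : 2 < Real.sqrt 5 := by nlinarith
  have hs3 : Real.sqrt 5 < 3 := by nlinarith
  set s := Real.sqrt 5 with hsdef
  have hu : 0 < |t| := abs_pos.mpr ht0
  have hcabs : |c| = |t| ^ 3 := by rw [← ht, abs_pow]
  -- the two roots and coefficients
  set p := (3 + s) / (2 * t) with hpdef
  set q := (3 - s) / (2 * t) with hqdef
  set A := (s - 3) / (18 * c) with hAdef
  set B := (-s - 3) / (18 * c) with hBdef
  have habsp : |p| = (3 + s) / (2 * |t|) := by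
    rw [hpdef, abs_div, abs_mul, abs_of_pos (by linarith : (0:ℝ) < 3 + s),
      abs_of_pos (by norm_num : (0:ℝ) < 2)]
  have habsq : |q| = (3 - s) / (2 * |t|) := by
    rw [hqdef, abs_div, abs_mul, abs_of_pos (by linarith : (0:ℝ) < 3 - s),
      abs_of_pos (by norm_num : (0:ℝ) < 2)]
  have hA0 : 0 < |A| := by
    rw [abs_pos, hAdef]
    exact div_ne_zero (by intro h; nlinarith [sub_eq_zero.mp h]) (by simpa using hc)
  have hB0 : 0 ≤ |B| := abs_nonneg B
  have hform : ∀ m : ℕ, cseq c t m = A * p ^ m + B * q ^ m := cseq_closed c t hc ht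
  constructor
  · -- |c| < κ³ : blow up
    intro hlt
    have hκ : |t| < (3 + s) / 2 := by
      refine lt_of_pow_lt_pow_left₀ 3 (by positivity) ?_
      rw [← hcabs]; exact hlt
    have hp1 : 1 < |p| := by
      rw [habsp]
      rw [lt_div_iff₀ (by positivity)]
      linarith
    set ρ := (3 - s) / (3 + s) with hρdef
    have hρ0 : 0 ≤ ρ := div_nonneg (by linarith) (by linarith)
    have hρ1 : ρ < 1 := by
      rw [div_lt_one (by linarith)]; linarith
    have hqρ : |q| = ρ * |p| := by
      rw [habsq, habsp, hρdef]
      field_simp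
    have htend0 : Filter.Tendsto (fun m : ℕ => |B| * ρ ^ m) Filter.atTop (nhds 0) := by
      have := (tendsto_pow_atTop_nhds_zero_of_lt_one hρ0 hρ1).const_mul |B|
      simpa using this
    have hev : ∀ᶠ m in Filter.atTop, |B| * ρ ^ m < |A| / 2 :=
      htend0.eventually_lt_const (by linarith)
    have hbound : ∀ᶠ m in Filter.atTop, |A| / 2 * |p| ^ m ≤ |cseq c t m| := by
      filter_upwards [hev] with m hm
      have h1 : |A * p ^ m| - |B * q ^ m| ≤ |cseq c t m| := by
        rw [hform m]
        have := abs_sub_abs_le_abs_sub (A * p ^ m) (-(B * q ^ m))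
        simpa [sub_neg_eq_add] using this
      have h2 : |B * q ^ m| ≤ |A| / 2 * |p| ^ m := by
        rw [abs_mul, abs_pow, hqρ, mul_pow]
        calc |B| * (ρ ^ m * |p| ^ m) = (|B| * ρ ^ m) * |p| ^ m := by ring
          _ ≤ |A| / 2 * |p| ^ m := by
              apply mul_le_mul_of_nonneg_right hm.le (by positivity)
      have h3 : |A * p ^ m| = |A| * |p| ^ m := by rw [abs_mul, abs_pow]
      nlinarith [pow_nonneg (abs_nonneg p) m]
    refine Filter.tendsto_atTop_mono' _ hbound ?_
    exact (tendsto_pow_atTop_atTop_of_one_lt hp1).const_mul_atTop (by positivity)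
  · -- κ³ < |c| : decay
    intro hlt
    have hκ : (3 + s) / 2 < |t| := by
      refine lt_of_pow_lt_pow_left₀ 3 (by positivity) ?_
      rw [← hcabs]; exact hlt
    have hp1 : |p| < 1 := by
      rw [habsp, div_lt_one (by positivity)]
      linarith
    have hqp : |q| ≤ |p| := by
      rw [habsp, habsq]
      apply div_le_div_of_nonneg_right (by linarith) (by positivity)
    have hbound : ∀ m : ℕ, |cseq c t m| ≤ (|A| + |B|) * |p| ^ m := fun m => by
      rw [hform m]
      calc |A * p ^ m + B * q ^ m| ≤ |A * p ^ m| + |B * q ^ m| := abs_add_le _ _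
        _ = |A| * |p| ^ m + |B| * |q| ^ m := by rw [abs_mul, abs_mul, abs_pow, abs_pow]
        _ ≤ |A| * |p| ^ m + |B| * |p| ^ m := by
            have := pow_le_pow_left₀ (abs_nonneg q) hqp m
            nlinarith
        _ = (|A| + |B|) * |p| ^ m := by ring
    apply squeeze_zero (fun m => abs_nonneg _) hbound
    have := (tendsto_pow_atTop_nhds_zero_of_lt_one (abs_nonneg p) hp1).const_mul (|A| + |B|)
    simpa using this
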